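/- Let ℙ be a forcing poset, A a subset of [ω]^ω with the strong finite intersection property, ℚ the Booth forcing for A, and x a ℚ-name for the generic pseudointersection of A. Let B be a ℙ-name such that the trivial condition of ℙ forces Ǎ ⊆ B ⊆ [ω]^ω and forces B to have the strong finite intersection property. Then the trivial condition of ℙ * ℚ̌ forces that B ∪ {x} (under the canonical embeddings of ℙ-names and ℚ-names into ℙ*ℚ̌-names) has the strong finite intersection property. -/
import Mathlib


open Cardinal

universe u

/-- Booth forcing preserves that a generic pseudointersection meets every finite
subfamily of a name for an SFIP family.  Setup: `P` is a forcing poset; `A` is a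
family of infinite subsets of `ω` with the strong finite intersection property;
the Booth forcing `Q` for `A` has conditions `(σ, F)` with `σ : Finset ℕ` and
`F ∈ [A]^{<ω}`, extension meaning `F` grows, `σ` end-extends inside `⋂ F`, and the
generic pseudointersection `x` is the union of the first coordinates.  A `P`-name
`B` with `1 ⊩ Ǎ ⊆ B ⊆ [ω]^ω` and `1 ⊩ "B has the SFIP"` is encoded by a family of
`P`-names for subsets of `ω`: partial decision functions `y i : P → ℕ → Option Bool`
that are monotone and densely decided, such that every member of `A` occurs as a
check-name (`hcheck`) and every finite subfamily is forced to have infinite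
intersection (`hBsfip`).  Conclusion: in the two-step iteration `P * Q̌`
(equivalently the product order), below any condition `(p, (σ, F))` and for any
finite set `t` of names from `B` and any `n`, some stronger condition
`(q, (σ', F'))` forces an `m ≥ n` into `x ∩ ⋂_{i ∈ t} y i`; i.e. `1_{P*Q̌}` forces
`B ∪ {x}` to have the SFIP. -/
theorem booth_generic_pseudointersection_sfip {P : Type u} [Preorder P]
    (A : Set (Set ℕ)) (hAinf : ∀ a ∈ A, a.Infinite)
    (hSFIP : ∀ s : Finset (Set ℕ), ↑s ⊆ A → (⋂₀ (s : Set (Set ℕ))).Infinite)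
    {ι : Type u} (y : ι → P → ℕ → Option Bool)
    (hmono : ∀ i p q n b, q ≤ p → y i p n = some b → y i q n = some b)
    (hdense : ∀ i p n, ∃ q, q ≤ p ∧ (y i q n).isSome)
    (hcheck : ∀ a ∈ A, ∃ i, ∀ p n,
      y i p n = some (@decide (n ∈ a) (Classical.propDecidable _)))
    (hBsfip : ∀ (t : Finset ι) (p : P) (n : ℕ),
      ∃ q, q ≤ p ∧ ∃ m, n ≤ m ∧ ∀ i ∈ t, y i q m = some true) :
    ∀ (p : P) (σ : Finset ℕ) (F : Finset (Set ℕ)), ↑F ⊆ A → ∀ (t : Finset ι) (n : ℕ),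
      ∃ q, q ≤ p ∧ ∃ (σ' : Finset ℕ) (F' : Finset (Set ℕ)), ↑F' ⊆ A ∧ F ⊆ F' ∧ σ ⊆ σ' ∧
        (↑σ' : Set ℕ) ⊆ (↑σ : Set ℕ) ∪ ⋂₀ (F : Set (Set ℕ)) ∧
        ∃ m, n ≤ m ∧ m ∈ σ' ∧ ∀ i ∈ t, y i q m = some true := by
  classical
  intro p σ F hFA t n
  choose g hg using hcheck
  set s : Finset ι := t ∪ F.attach.image (fun a => g a.1 (hFA a.2)) with hs
  obtain ⟨q, hq, m, hm, hall⟩ := hBsfip s p n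
  have hmF : m ∈ ⋂₀ (F : Set (Set ℕ)) := by
    intro a haF
    have haF' : a ∈ F := haF
    have hmem : g a (hFA haF') ∈ s := by
      apply Finset.mem_union_right
      exact Finset.mem_image.2 ⟨⟨a, haF'⟩, Finset.mem_attach _ _, rfl⟩
    have h1 := hall _ hmem
    have h2 := hg a (hFA haF') q m
    rw [h1] at h2
    exact of_decide_eq_true (Option.some_injective _ h2.symm)
  refine ⟨q, hq, σ ∪ {m}, F, hFA, subset_rfl, Finset.subset_union_left, ?_, m, hm, ?_, ?_⟩
  · intro x hx
    rcases Finset.mem_union.1 hx with h | h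
    · exact Or.inl h
    · rw [Finset.mem_singleton] at h; subst h; exact Or.inr hmF
  · exact Finset.mem_union_right _ (Finset.mem_singleton_self m)
  · intro i hi
    exact hall i (Finset.mem_union_left _ hi)
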